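/- The complete graph K_6 does not have rique-number 1. -/

import Mathlib

variable {V : Type*}

/-- The order `f` avoids the rique forbidden pattern P.1. -/
def RiqueFree (G : SimpleGraph V) (f : V → ℕ) : Prop :=
  ∀ a a' b b' c c', G.Adj a a' → G.Adj b b' → G.Adj c c' →
    ¬ (f a < f b ∧ f b < f c ∧ f c < f b' ∧ f b' < f a' ∧ f b' < f c')

/-- `G` has rique-number 1: some linear vertex order avoids the pattern. -/
def HasOnePageRique (G : SimpleGraph V) : Prop :=
  ∃ f : V → ℕ, Function.Injective f ∧ RiqueFree G f

/-- The complete graph `K_6` does not have rique-number 1. -/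
theorem K6_not_one_page_rique : ¬ HasOnePageRique (SimpleGraph.completeGraph (Fin 6)) := by
  rintro ⟨f, hinj, hfree⟩
  set σ := Tuple.sort f with hσ
  have hmono : Monotone (f ∘ σ) := Tuple.monotone_sort f
  have hinj2 : Function.Injective (f ∘ σ) := hinj.comp σ.injective
  have hsm : StrictMono (f ∘ σ) := hmono.strictMono_of_injective hinj2
  have hne : ∀ i j : Fin 6, i ≠ j → σ i ≠ σ j := fun i j h => fun hc => h (σ.injective hc)
  exact hfree (σ 0) (σ 5) (σ 1) (σ 3) (σ 2) (σ 4)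
    (hne 0 5 (by decide)) (hne 1 3 (by decide)) (hne 2 4 (by decide))
    ⟨hsm (by decide), hsm (by decide), hsm (by decide), hsm (by decide), hsm (by decide)⟩
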